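/- arXiv:2601.08452 — 2 statements merged into one kernel-verified Lean document; each statement's English description precedes it below -/
import Mathlib

section
/- The 16-point code C' ⊂ ℤ₆⁴ consisting of the points (0,0,0,0), (4,2,4,0), (3,3,3,3), (2,0,4,2), (2,4,2,0), (3,1,1,1), (1,1,3,5), (1,5,1,3), (0,2,2,2), (3,5,5,5), (1,3,5,1), (0,4,4,4), (4,0,2,4), (4,4,0,2), (5,1,5,3), (5,5,3,1) has minimum L₂-norm toroidal distance (modulus 6) equal to 2√3. -/
/-- Toroidal distance modulus `p`: least Euclidean norm of `v₁ - v₂ + k`,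
`k ∈ pℤ^ℓ`. -/
noncomputable def torusDist (p : ℕ) {ℓ : ℕ} (v₁ v₂ : Fin ℓ → ℤ) : ℝ :=
  sInf {r : ℝ | ∃ k : Fin ℓ → ℤ,
    r = Real.sqrt (∑ i, ((v₁ i - v₂ i + (p : ℤ) * k i : ℤ) : ℝ) ^ 2)}

/-- The 16-point GTD code in `ℤ₆⁴` from Example (ℓ = 4). -/
def gtdCode4 : Set (Fin 4 → ℤ) :=
  {![0,0,0,0], ![4,2,4,0], ![3,3,3,3], ![2,0,4,2],
   ![2,4,2,0], ![3,1,1,1], ![1,1,3,5], ![1,5,1,3],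
   ![0,2,2,2], ![3,5,5,5], ![1,3,5,1], ![0,4,4,4],
   ![4,0,2,4], ![4,4,0,2], ![5,1,5,3], ![5,5,3,1]}

def mq (d : ℤ) : ℤ := min ((d % 6)^2) ((6 - d % 6)^2)

lemma mq_le (d k : ℤ) : mq d ≤ (d + 6 * k)^2 := by
  have h0 : 0 ≤ d % 6 := Int.emod_nonneg d (by norm_num)
  have h6 : d % 6 < 6 := Int.emod_lt_of_pos d (by norm_num)
  have hd : 6 * (d / 6) + d % 6 = d := Int.mul_ediv_add_emod d 6
  set r := d % 6 with hr
  have hx : d + 6 * k = r + 6 * (d / 6 + k) := by linarith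
  set m := d / 6 + k with hm
  rw [hx, mq, ← hr]
  rcases lt_trichotomy m 0 with h | h | h
  · have h1 : m ≤ -1 := by omega
    calc min (r^2) ((6-r)^2) ≤ (6 - r)^2 := min_le_right _ _
      _ ≤ (r + 6*m)^2 := by nlinarith
  · rw [h]; simpa using min_le_left (r^2) ((6-r)^2)
  · have h1 : 1 ≤ m := h
    calc min (r^2) ((6-r)^2) ≤ (6 - r)^2 := min_le_right _ _
      _ ≤ (r + 6*m)^2 := by nlinarith

def codeList : List (Fin 4 → ℤ) :=
  [![0,0,0,0], ![4,2,4,0], ![3,3,3,3], ![2,0,4,2],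
   ![2,4,2,0], ![3,1,1,1], ![1,1,3,5], ![1,5,1,3],
   ![0,2,2,2], ![3,5,5,5], ![1,3,5,1], ![0,4,4,4],
   ![4,0,2,4], ![4,4,0,2], ![5,1,5,3], ![5,5,3,1]]

lemma sum_mq_ge : ∀ v₁ ∈ codeList, ∀ v₂ ∈ codeList, v₁ ≠ v₂ →
    12 ≤ mq (v₁ 0 - v₂ 0) + mq (v₁ 1 - v₂ 1) + mq (v₁ 2 - v₂ 2) + mq (v₁ 3 - v₂ 3) := by
  decide

lemma mem_codeList {v : Fin 4 → ℤ} (h : v ∈ gtdCode4) : v ∈ codeList := by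
  simp only [gtdCode4, Set.mem_insert_iff, Set.mem_singleton_iff] at h
  simp only [codeList, List.mem_cons, List.not_mem_nil, or_false]
  tauto

lemma key {v₁ v₂ : Fin 4 → ℤ} (h₁ : v₁ ∈ gtdCode4) (h₂ : v₂ ∈ gtdCode4)
    (hne : v₁ ≠ v₂) (k : Fin 4 → ℤ) :
    (12 : ℤ) ≤ ∑ i, (v₁ i - v₂ i + 6 * k i)^2 := by
  have h := sum_mq_ge v₁ (mem_codeList h₁) v₂ (mem_codeList h₂) hne
  have b : ∀ i, mq (v₁ i - v₂ i) ≤ (v₁ i - v₂ i + 6 * k i)^2 := fun i => mq_le _ _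
  rw [Fin.sum_univ_four]
  linarith [b 0, b 1, b 2, b 3]

lemma sqrt12 : Real.sqrt 12 = 2 * Real.sqrt 3 := by
  rw [show (12:ℝ) = 2^2 * 3 by norm_num, Real.sqrt_mul (by positivity),
    Real.sqrt_sq (by norm_num)]

lemma key_real {v₁ v₂ : Fin 4 → ℤ} (h₁ : v₁ ∈ gtdCode4) (h₂ : v₂ ∈ gtdCode4)
    (hne : v₁ ≠ v₂) (k : Fin 4 → ℤ) :
    2 * Real.sqrt 3 ≤ Real.sqrt (∑ i, ((v₁ i - v₂ i + (6:ℤ) * k i : ℤ) : ℝ) ^ 2) := by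
  rw [← sqrt12]
  apply Real.sqrt_le_sqrt
  have h := key h₁ h₂ hne k
  have : ((12:ℤ):ℝ) ≤ ((∑ i, (v₁ i - v₂ i + 6 * k i)^2 : ℤ) : ℝ) := by exact_mod_cast h
  push_cast at this ⊢
  convert this using 2 <;> norm_num

/-- the 16-point code `C' ⊆ ℤ₆⁴` has minimum `L₂`-norm toroidal
distance (modulus 6) equal to `2√3`. -/
theorem stmt17 :
    IsLeast
      {r : ℝ | ∃ v₁ ∈ gtdCode4, ∃ v₂ ∈ gtdCode4, v₁ ≠ v₂ ∧ r = torusDist 6 v₁ v₂}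
      (2 * Real.sqrt 3) := by
  have h₁ : (![0,0,0,0] : Fin 4 → ℤ) ∈ gtdCode4 := by left; rfl
  have h₂ : (![2,4,2,0] : Fin 4 → ℤ) ∈ gtdCode4 := by
    simp only [gtdCode4, Set.mem_insert_iff]; tauto
  have hne : (![0,0,0,0] : Fin 4 → ℤ) ≠ ![2,4,2,0] := by decide
  constructor
  · refine ⟨_, h₁, _, h₂, hne, ?_⟩
    unfold torusDist
    symm
    apply IsLeast.csInf_eq
    constructor
    · refine ⟨![0,1,0,0], ?_⟩
      rw [Fin.sum_univ_four]
      norm_num [sqrt12, Matrix.cons_val_two, Matrix.cons_val_three]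
    · rintro b ⟨k, rfl⟩
      exact key_real h₁ h₂ hne k
  · rintro r ⟨v₁, hv₁, v₂, hv₂, hvne, rfl⟩
    unfold torusDist
    apply le_csInf
    · exact ⟨_, 0, rfl⟩
    · rintro b ⟨k, rfl⟩
      exact key_real hv₁ hv₂ hvne k
end

section
/- Let 2E₈ denote the E₈ lattice scaled by 2, which has determinant 2⁸ and minimum Euclidean distance 2√2, and which contains the sublattice 4ℤ⁸. Then the code C' = 2E₈ ∩ {0,1,2,3}⁸ ⊂ ℤ₄⁸ has exactly 2⁸ = 256 points and minimum L₂-norm toroidal distance (modulus 4) equal to 2√2; consequently, the scaled code ⌊q/4⌋·C' ⊂ ℤ_q⁸ has minimum toroidal distance modulus q equal to 2√2·⌊q/4⌋. -/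
/-- The lattice `2E₈ ⊆ ℤ⁸`: vectors whose coordinates are all even or all odd,
with coordinate sum divisible by `4` (the `E₈` lattice scaled by `2`). -/
def twoE8 : AddSubgroup (Fin 8 → ℤ) where
  carrier := {x | ((∀ i, Even (x i)) ∨ (∀ i, Odd (x i))) ∧ (4 : ℤ) ∣ ∑ i, x i}
  zero_mem' := by
    refine ⟨Or.inl fun i => ?_, by simp⟩
    simp
  add_mem' := by
    rintro a b ⟨hpa, hda⟩ ⟨hpb, hdb⟩
    refine ⟨?_, by simpa [Finset.sum_add_distrib] using dvd_add hda hdb⟩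
    rcases hpa with hpa | hpa <;> rcases hpb with hpb | hpb
    · exact Or.inl fun i => (hpa i).add (hpb i)
    · exact Or.inr fun i => (hpa i).add_odd (hpb i)
    · exact Or.inr fun i => (hpa i).add_even (hpb i)
    · exact Or.inl fun i => (hpa i).add_odd (hpb i)
  neg_mem' := by
    rintro a ⟨hpa, hda⟩
    refine ⟨?_, by simpa [Finset.sum_neg_distrib] using hda.neg_right⟩
    rcases hpa with hpa | hpa
    · exact Or.inl fun i => (hpa i).neg
    · exact Or.inr fun i => (hpa i).neg

/-- Euclidean distance between integer vectors. -/
noncomputable def eucDist {ℓ : ℕ} (v₁ v₂ : Fin ℓ → ℤ) : ℝ :=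
  Real.sqrt (∑ i, ((v₁ i - v₂ i : ℤ) : ℝ) ^ 2)

def Hgrp : AddSubgroup (Fin 8 → ZMod 4) where
  carrier := {x | ((∀ i, x i = 0 ∨ x i = 2) ∨ (∀ i, x i = 1 ∨ x i = 3)) ∧ ∑ i, x i = 0}
  zero_mem' := ⟨Or.inl fun _ => Or.inl rfl, by simp⟩
  add_mem' := by
    rintro a b ⟨hpa, hsa⟩ ⟨hpb, hsb⟩
    refine ⟨?_, by simp [Finset.sum_add_distrib, hsa, hsb]⟩
    have hee : ∀ u v : ZMod 4, (u = 0 ∨ u = 2) → (v = 0 ∨ v = 2) → (u+v = 0 ∨ u+v = 2) := by decide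
    have heo : ∀ u v : ZMod 4, (u = 0 ∨ u = 2) → (v = 1 ∨ v = 3) → (u+v = 1 ∨ u+v = 3) := by decide
    have hoe : ∀ u v : ZMod 4, (u = 1 ∨ u = 3) → (v = 0 ∨ v = 2) → (u+v = 1 ∨ u+v = 3) := by decide
    have hoo : ∀ u v : ZMod 4, (u = 1 ∨ u = 3) → (v = 1 ∨ v = 3) → (u+v = 0 ∨ u+v = 2) := by decide
    rcases hpa with hpa | hpa <;> rcases hpb with hpb | hpb
    · exact Or.inl fun i => hee _ _ (hpa i) (hpb i)
    · exact Or.inr fun i => heo _ _ (hpa i) (hpb i)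
    · exact Or.inr fun i => hoe _ _ (hpa i) (hpb i)
    · exact Or.inl fun i => hoo _ _ (hpa i) (hpb i)
  neg_mem' := by
    rintro a ⟨hpa, hsa⟩
    refine ⟨?_, by simp [Finset.sum_neg_distrib, hsa]⟩
    have he : ∀ u : ZMod 4, (u = 0 ∨ u = 2) → (-u = 0 ∨ -u = 2) := by decide
    have ho : ∀ u : ZMod 4, (u = 1 ∨ u = 3) → (-u = 1 ∨ -u = 3) := by decide
    rcases hpa with hpa | hpa
    · exact Or.inl fun i => he _ (hpa i)
    · exact Or.inr fun i => ho _ (hpa i)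

/-- low bit -/
def lo (a : ZMod 4) : ZMod 2 := ((a.val : ℕ) : ZMod 2)
/-- high bit -/
def hb (a : ZMod 4) : ZMod 2 := ((a.val / 2 : ℕ) : ZMod 2)
/-- lift -/
def lf (b : ZMod 2) : ZMod 4 := ((b.val : ℕ) : ZMod 4)

lemma recon : ∀ p t : ZMod 2, lo (lf p + 2 * lf t) = p ∧ hb (lf p + 2 * lf t) = t := by decide

lemma twoMul_eq_zero_iff : ∀ a : ZMod 4, 2 * a = 0 ↔ (a = 0 ∨ a = 2) := by decide
lemma twoMul_eq_two_iff : ∀ a : ZMod 4, 2 * a = 2 ↔ (a = 1 ∨ a = 3) := by decide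
lemma recon' : ∀ a : ZMod 4, lf (lo a) + 2 * lf (hb a) = a := by decide
lemma lo_eq_lo : ∀ a b : ZMod 4, (((a = 0 ∨ a = 2) ∧ (b = 0 ∨ b = 2)) ∨ ((a = 1 ∨ a = 3) ∧ (b = 1 ∨ b = 3))) → lo a = lo b := by decide

def HEquiv : Hgrp ≃ ZMod 2 × (Fin 7 → ZMod 2) where
  toFun x := (lo (x.1 0), fun j => hb (x.1 j.castSucc))
  invFun ph := by
    refine ⟨Fin.snoc (fun j => lf ph.1 + 2 * lf (ph.2 j)) (-(∑ j : Fin 7, (lf ph.1 + 2 * lf (ph.2 j)))), ?_, ?_⟩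
    · -- parity condition
      rcases ph with ⟨p, h⟩
      have key : ∀ j : Fin 7, 2 * (lf p + 2 * lf (h j)) = 2 * lf p := by
        intro j; have : ∀ a b : ZMod 2, 2 * (lf a + 2 * lf b) = 2 * lf a := by decide
        exact this p (h j)
      have hsum : 2 * (-(∑ j : Fin 7, (lf p + 2 * lf (h j)))) = -(7 * (2 * lf p)) := by
        rw [mul_neg, Finset.mul_sum]
        simp only [key]
        rw [Finset.sum_const, Finset.card_univ, Fintype.card_fin]
        push_cast; ring
      fin_cases p
      · left
        intro i
        rw [← twoMul_eq_zero_iff]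
        refine Fin.lastCases ?_ ?_ i
        · rw [Fin.snoc_last, hsum]; decide
        · intro j; rw [Fin.snoc_castSucc, key]; decide
      · right
        intro i
        rw [← twoMul_eq_two_iff]
        refine Fin.lastCases ?_ ?_ i
        · rw [Fin.snoc_last, hsum]; decide
        · intro j; rw [Fin.snoc_castSucc, key]; decide
    · -- sum condition
      rw [Fin.sum_univ_castSucc]
      simp only [Fin.snoc_castSucc, Fin.snoc_last]; simp
  left_inv := by
    rintro ⟨x, hpar, hsum⟩
    ext i
    simp only
    refine Fin.lastCases ?_ ?_ i
    · rw [Fin.snoc_last]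
      have h7 : x (Fin.last 7) = -(∑ j : Fin 7, x j.castSucc) := by
        rw [Fin.sum_univ_castSucc] at hsum
        linear_combination hsum
      rw [h7]
      congr 1
      refine Finset.sum_congr rfl fun j _ => ?_
      have : lo (x j.castSucc) = lo (x 0) := by
        apply lo_eq_lo _ _
        rcases hpar with h | h
        · exact Or.inl ⟨h _, h _⟩
        · exact Or.inr ⟨h _, h _⟩
      rw [← this, recon' (x j.castSucc)]
    · intro j
      rw [Fin.snoc_castSucc]
      have : lo (x 0) = lo (x j.castSucc) := by
        apply lo_eq_lo _ _
        rcases hpar with h | h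
        · exact Or.inl ⟨h _, h _⟩
        · exact Or.inr ⟨h _, h _⟩
      rw [this, recon' (x j.castSucc)]
  right_inv := by
    rintro ⟨p, h⟩
    have h0 : (0 : Fin 8) = Fin.castSucc (0 : Fin 7) := rfl
    ext
    · simp only [h0, Fin.snoc_castSucc]
      exact (recon p (h 0)).1
    · simp only [Fin.snoc_castSucc]
      exact (recon p _).2

lemma card_Hgrp : Nat.card Hgrp = 256 := by
  rw [Nat.card_congr HEquiv]
  simp [Nat.card_eq_fintype_card]

lemma mem_Hgrp (x : Fin 8 → ZMod 4) : x ∈ Hgrp ↔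
  ((∀ i, x i = 0 ∨ x i = 2) ∨ (∀ i, x i = 1 ∨ x i = 3)) ∧ ∑ i, x i = 0 := Iff.rfl

lemma mem_twoE8 (x : Fin 8 → ℤ) : x ∈ twoE8 ↔
  ((∀ i, Even (x i)) ∨ (∀ i, Odd (x i))) ∧ (4 : ℤ) ∣ ∑ i, x i := Iff.rfl

lemma zmod4_even_iff (x : ℤ) : Even x ↔ ((x : ZMod 4) = 0 ∨ (x : ZMod 4) = 2) := by
  have h2 : Even x ↔ ((x : ZMod 2) = 0) := by
    rw [show Even x ↔ (2:ℤ) ∣ x from ⟨fun ⟨r,h⟩ => ⟨r, by omega⟩, fun ⟨r,h⟩ => ⟨r, by omega⟩⟩]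
    exact (ZMod.intCast_zmod_eq_zero_iff_dvd x 2).symm
  have hmap : ((x : ZMod 2)) = (ZMod.castHom (by norm_num : (2:ℕ) ∣ 4) (ZMod 2)) (x : ZMod 4) :=
    (map_intCast _ x).symm
  rw [h2, hmap]
  have : ∀ y : ZMod 4, (ZMod.castHom (by norm_num : (2:ℕ) ∣ 4) (ZMod 2)) y = 0 ↔ (y = 0 ∨ y = 2) := by decide
  exact this _

lemma zmod4_odd_iff (x : ℤ) : Odd x ↔ ((x : ZMod 4) = 1 ∨ (x : ZMod 4) = 3) := by
  rw [← Int.not_even_iff_odd, zmod4_even_iff]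
  have : ∀ y : ZMod 4, ¬(y = 0 ∨ y = 2) ↔ (y = 1 ∨ y = 3) := by decide
  exact this _

/-- reduction hom -/
def redh : (Fin 8 → ℤ) →+ (Fin 8 → ZMod 4) where
  toFun v := fun i => (v i : ZMod 4)
  map_zero' := by funext i; simp
  map_add' a b := by funext i; simp

lemma redh_surj : Function.Surjective redh := by
  intro y
  refine ⟨fun i => ((y i).val : ℤ), ?_⟩
  funext i
  simp [redh, ZMod.natCast_val, ZMod.cast_id]

lemma mem_twoE8_iff (v : Fin 8 → ℤ) : v ∈ twoE8 ↔ redh v ∈ Hgrp := by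
  rw [mem_Hgrp]
  have hs : ((∑ i, v i : ℤ) : ZMod 4) = ∑ i, (v i : ZMod 4) := by push_cast; rfl
  have hd : ((4:ℤ) ∣ ∑ i, v i) ↔ (∑ i, (v i : ZMod 4)) = 0 := by
    rw [← hs]; exact (ZMod.intCast_zmod_eq_zero_iff_dvd _ 4).symm
  constructor
  · rintro ⟨hp, hdv⟩
    refine ⟨?_, hd.mp hdv⟩
    rcases hp with h | h
    · exact Or.inl fun i => (zmod4_even_iff _).mp (h i)
    · exact Or.inr fun i => (zmod4_odd_iff _).mp (h i)
  · rintro ⟨hp, hdv⟩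
    refine ⟨?_, hd.mpr hdv⟩
    rcases hp with h | h
    · exact Or.inl fun i => (zmod4_even_iff _).mpr (h i)
    · exact Or.inr fun i => (zmod4_odd_iff _).mpr (h i)

lemma twoE8_eq_comap : twoE8 = Hgrp.comap redh := by
  ext v; exact mem_twoE8_iff v

lemma index_twoE8 : twoE8.index = 2 ^ 8 := by
  rw [twoE8_eq_comap, AddSubgroup.index_comap_of_surjective _ redh_surj]
  have h1 := AddSubgroup.index_mul_card Hgrp
  rw [card_Hgrp] at h1
  have h2 : Nat.card (Fin 8 → ZMod 4) = 65536 := by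
    simp [Nat.card_eq_fintype_card]
  rw [h2] at h1
  exact Nat.eq_of_mul_eq_mul_right (by norm_num : 0 < 256) (h1.trans (by norm_num))

/-- the code C' -/
def codeEquiv : {v : Fin 8 → ℤ // v ∈ twoE8 ∧ ∀ i, v i ∈ Set.Ico (0 : ℤ) 4} ≃ Hgrp where
  toFun v := ⟨redh v.1, (mem_twoE8_iff v.1).mp v.2.1⟩
  invFun x := ⟨fun i => ((x.1 i).val : ℤ), by
    constructor
    · rw [mem_twoE8_iff]
      have : redh (fun i => ((x.1 i).val : ℤ)) = x.1 := by
        funext i; simp [redh, ZMod.natCast_val, ZMod.cast_id]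
      rw [this]; exact x.2
    · intro i
      constructor
      · positivity
      · show (((x.1 i).val : ℤ)) < 4
        exact_mod_cast ZMod.val_lt (x.1 i)⟩
  left_inv := by
    rintro ⟨v, hv, hbox⟩
    ext i
    simp only [redh, AddMonoidHom.coe_mk, ZeroHom.coe_mk]
    have h0 := (hbox i).1
    have h4 := (hbox i).2
    have : ((v i : ZMod 4)).val = (v i).toNat := by
      rw [show ((v i : ZMod 4)) = (((v i).toNat : ℕ) : ZMod 4) by
        rw [show ((v i).toNat : ZMod 4) = (((v i).toNat : ℤ) : ZMod 4) by push_cast; rfl, Int.toNat_of_nonneg h0]]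
      exact ZMod.val_natCast_of_lt (by omega)
    rw [this]
    omega
  right_inv := by
    rintro ⟨x, hx⟩
    ext i
    simp [redh, ZMod.natCast_val, ZMod.cast_id]

lemma card_code : Nat.card {v : Fin 8 → ℤ // v ∈ twoE8 ∧ ∀ i, v i ∈ Set.Ico (0 : ℤ) 4} = 256 := by
  rw [Nat.card_congr codeEquiv, card_Hgrp]

section intlemmas

lemma coord1 (c q x k : ℤ) (hc : 1 ≤ c) (hq : 4 * c ≤ q) (hx : |x| ≤ 3) (hx0 : x ≠ 0) :
    c ^ 2 ≤ (c * x + q * k) ^ 2 := by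
  obtain ⟨hx1, hx2⟩ := abs_le.mp hx
  rcases lt_trichotomy k 0 with hk | hk | hk
  · have hk' : k ≤ -1 := by omega
    have h1 : c * x + q * k ≤ -c := by nlinarith
    nlinarith
  · subst hk
    have h2 : 1 ≤ x ^ 2 := by
      rcases lt_or_gt_of_ne hx0 with h | h <;> nlinarith
    nlinarith
  · have hk' : 1 ≤ k := hk
    have h1 : c ≤ c * x + q * k := by nlinarith
    nlinarith

lemma coord2 (c q x k : ℤ) (hc : 1 ≤ c) (hq : 4 * c ≤ q) (hx : x = 2 ∨ x = -2) :
    4 * c ^ 2 ≤ (c * x + q * k) ^ 2 := by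
  rcases lt_trichotomy k 0 with hk | hk | hk
  · have hk' : k ≤ -1 := by omega
    have h1 : c * x + q * k ≤ -(2*c) := by rcases hx with h | h <;> subst h <;> nlinarith
    nlinarith
  · subst hk
    rcases hx with h | h <;> subst h <;> nlinarith
  · have hk' : 1 ≤ k := hk
    have h1 : 2*c ≤ c * x + q * k := by rcases hx with h | h <;> subst h <;> nlinarith
    nlinarith

lemma sum_sq_ge (c q : ℤ) (hc : 1 ≤ c) (hq : 4 * c ≤ q) (d : Fin 8 → ℤ)
    (hd : d ∈ twoE8) (hd0 : d ≠ 0) (hbd : ∀ i, |d i| < 4) (k : Fin 8 → ℤ) :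
    8 * c ^ 2 ≤ ∑ i, (c * d i + q * k i) ^ 2 := by
  obtain ⟨hpar, hdvd⟩ := (mem_twoE8 d).mp hd
  rcases hpar with he | ho
  · obtain ⟨i₀, hi₀⟩ : ∃ i, d i ≠ 0 := by
      by_contra h; push_neg at h; exact hd0 (funext h)
    have key : ∀ i, d i ≠ 0 → (d i = 2 ∨ d i = -2) := by
      intro i hi; obtain ⟨m, hm⟩ := he i; have := hbd i
      have := abs_lt.mp this
      omega
    obtain ⟨j, hj, hj0⟩ : ∃ j, j ≠ i₀ ∧ d j ≠ 0 := by
      by_contra h; push_neg at h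
      have hs : ∑ i, d i = d i₀ :=
        Finset.sum_eq_single i₀ (fun b _ hb => h b hb) (by simp)
      rcases key i₀ hi₀ with h2 | h2 <;> rw [hs, h2] at hdvd <;> omega
    have hterm : ∀ i, d i ≠ 0 → 4 * c ^ 2 ≤ (c * d i + q * k i) ^ 2 := fun i hi =>
      coord2 c q (d i) (k i) hc hq (key i hi)
    calc 8 * c ^ 2 = 4 * c ^ 2 + 4 * c ^ 2 := by ring
    _ ≤ (c * d i₀ + q * k i₀) ^ 2 + (c * d j + q * k j) ^ 2 :=
        add_le_add (hterm i₀ hi₀) (hterm j hj0)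
    _ = ∑ i ∈ ({i₀, j} : Finset (Fin 8)), (c * d i + q * k i) ^ 2 := by
        rw [Finset.sum_pair (Ne.symm hj)]
    _ ≤ ∑ i, (c * d i + q * k i) ^ 2 :=
        Finset.sum_le_sum_of_subset_of_nonneg (Finset.subset_univ _)
          (fun i _ _ => sq_nonneg _)
  · have hterm : ∀ i ∈ Finset.univ, c ^ 2 ≤ (c * d i + q * k i) ^ 2 := by
      intro i _
      obtain ⟨m, hm⟩ := ho i
      have hb := abs_lt.mp (hbd i)
      exact coord1 c q (d i) (k i) hc hq (by rw [abs_le]; omega) (by omega)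
    calc 8 * c ^ 2 = ∑ _i : Fin 8, c ^ 2 := by
          rw [Finset.sum_const, Finset.card_univ, Fintype.card_fin]; ring
    _ ≤ _ := Finset.sum_le_sum hterm

lemma sum_sq_ge' (d : Fin 8 → ℤ) (hd : d ∈ twoE8) (hd0 : d ≠ 0) :
    8 ≤ ∑ i, d i ^ 2 := by
  obtain ⟨hpar, hdvd⟩ := (mem_twoE8 d).mp hd
  obtain ⟨i₀, hi₀⟩ : ∃ i, d i ≠ 0 := by
    by_contra h; push_neg at h; exact hd0 (funext h)
  rcases hpar with he | ho
  · have key : ∀ i, d i ≠ 0 → 4 ≤ d i ^ 2 := by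
      intro i hi; obtain ⟨m, hm⟩ := he i
      have : d i ≤ -2 ∨ 2 ≤ d i := by omega
      rcases this with h | h <;> nlinarith
    by_cases hj : ∃ j, j ≠ i₀ ∧ d j ≠ 0
    · obtain ⟨j, hj, hj0⟩ := hj
      calc (8:ℤ) = 4 + 4 := by ring
      _ ≤ d i₀ ^ 2 + d j ^ 2 := add_le_add (key i₀ hi₀) (key j hj0)
      _ = ∑ i ∈ ({i₀, j} : Finset (Fin 8)), d i ^ 2 := by
          rw [Finset.sum_pair (Ne.symm hj)]
      _ ≤ ∑ i, d i ^ 2 :=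
          Finset.sum_le_sum_of_subset_of_nonneg (Finset.subset_univ _)
            (fun i _ _ => sq_nonneg _)
    · push_neg at hj
      have hs : ∑ i, d i = d i₀ :=
        Finset.sum_eq_single i₀ (fun b _ hb => hj b hb) (by simp)
      rw [hs] at hdvd
      have h4 : d i₀ ≤ -4 ∨ 4 ≤ d i₀ := by omega
      have h16 : 16 ≤ d i₀ ^ 2 := by rcases h4 with h | h <;> nlinarith
      calc (8:ℤ) ≤ 16 := by norm_num
      _ ≤ d i₀ ^ 2 := h16
      _ ≤ ∑ i, d i ^ 2 := Finset.single_le_sum (fun i _ => sq_nonneg (d i)) (Finset.mem_univ i₀)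
  · have hterm : ∀ i ∈ Finset.univ, 1 ≤ d i ^ 2 := by
      intro i _
      obtain ⟨m, hm⟩ := ho i
      have : d i ≤ -1 ∨ 1 ≤ d i := by omega
      rcases this with h | h <;> nlinarith
    calc (8:ℤ) = ∑ _i : Fin 8, 1 := by simp
    _ ≤ _ := Finset.sum_le_sum hterm

end intlemmas


lemma sqrt8_eq : Real.sqrt 8 = 2 * Real.sqrt 2 := by
  rw [show (8:ℝ) = 2^2*2 by norm_num, Real.sqrt_mul (by positivity), Real.sqrt_sq (by norm_num)]

lemma sqrt8c (c : ℝ) (hc : 0 ≤ c) : Real.sqrt (8 * c^2) = 2 * Real.sqrt 2 * c := by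
  rw [show (8:ℝ)*c^2 = 8 * c^2 by ring, Real.sqrt_mul (by norm_num), sqrt8_eq, Real.sqrt_sq hc]

def wvec : Fin 8 → ℤ := fun i => if i.val < 2 then 2 else 0

lemma wvec_mem : wvec ∈ twoE8 := by
  rw [mem_twoE8]
  constructor
  · exact Or.inl fun i => by fin_cases i <;> simp [wvec] <;> decide
  · rw [show ∑ i, wvec i = 4 by simp [wvec, Fin.sum_univ_eight]]

lemma wvec_box : ∀ i, wvec i ∈ Set.Ico (0:ℤ) 4 := by
  intro i; fin_cases i <;> simp [wvec, Set.mem_Ico]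

lemma wvec_ne : wvec ≠ 0 := by
  intro h; have := congrFun h 0; simp [wvec] at this

lemma torus_elem_lb (q : ℕ) (hq : 4 ≤ q) (v₁ v₂ : Fin 8 → ℤ)
    (h₁ : v₁ ∈ twoE8) (hb₁ : ∀ i, v₁ i ∈ Set.Ico (0:ℤ) 4)
    (h₂ : v₂ ∈ twoE8) (hb₂ : ∀ i, v₂ i ∈ Set.Ico (0:ℤ) 4) (hne : v₁ ≠ v₂)
    (k : Fin 8 → ℤ) :
    2 * Real.sqrt 2 * ((q/4 : ℕ) : ℝ) ≤
      Real.sqrt (∑ i, ((((q/4:ℕ):ℤ) * v₁ i - ((q/4:ℕ):ℤ) * v₂ i + (q:ℤ) * k i : ℤ) : ℝ) ^ 2) := by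
  set c : ℤ := ((q/4:ℕ):ℤ) with hcdef
  have hq4 : 1 ≤ q/4 := (Nat.one_le_div_iff (by norm_num)).mpr hq
  have hc : 1 ≤ c := by rw [hcdef]; exact_mod_cast hq4
  have hcq : 4 * c ≤ (q:ℤ) := by
    have := Nat.div_mul_le_self q 4
    rw [hcdef]
    omega
  have hd : (v₁ - v₂) ∈ twoE8 := sub_mem h₁ h₂
  have hd0 : v₁ - v₂ ≠ 0 := sub_ne_zero_of_ne hne
  have hbd : ∀ i, |(v₁ - v₂) i| < 4 := by
    intro i
    have a := hb₁ i; have b := hb₂ i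
    simp only [Set.mem_Ico] at a b
    rw [abs_lt, Pi.sub_apply]
    omega
  have key := sum_sq_ge c q hc hcq (v₁ - v₂) hd hd0 hbd k
  simp only [Pi.sub_apply] at key
  have hc0 : (0:ℝ) ≤ ((q/4:ℕ):ℝ) := by positivity
  rw [← sqrt8c _ hc0]
  apply Real.sqrt_le_sqrt
  calc (8:ℝ) * ((q/4:ℕ):ℝ)^2 = ((8*c^2 : ℤ) : ℝ) := by rw [hcdef]; norm_cast
  _ ≤ ((∑ i, (c * (v₁ i - v₂ i) + (q:ℤ) * k i)^2 : ℤ) : ℝ) := by exact_mod_cast key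
  _ = ∑ i, ((c * v₁ i - c * v₂ i + (q:ℤ) * k i : ℤ) : ℝ)^2 := by
      push_cast
      exact Finset.sum_congr rfl fun i _ => by ring

lemma torus_ge (q : ℕ) (hq : 4 ≤ q) (v₁ v₂ : Fin 8 → ℤ)
    (h₁ : v₁ ∈ twoE8) (hb₁ : ∀ i, v₁ i ∈ Set.Ico (0:ℤ) 4)
    (h₂ : v₂ ∈ twoE8) (hb₂ : ∀ i, v₂ i ∈ Set.Ico (0:ℤ) 4) (hne : v₁ ≠ v₂) :
    2 * Real.sqrt 2 * ((q/4 : ℕ) : ℝ) ≤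
      torusDist q (fun i => ((q/4:ℕ):ℤ) * v₁ i) (fun i => ((q/4:ℕ):ℤ) * v₂ i) := by
  refine le_csInf ⟨_, 0, rfl⟩ ?_
  rintro b ⟨k, rfl⟩
  exact torus_elem_lb q hq v₁ v₂ h₁ hb₁ h₂ hb₂ hne k

lemma torus_pair_eq (q : ℕ) (hq : 4 ≤ q) :
    torusDist q (fun i => ((q/4:ℕ):ℤ) * wvec i) (fun i => ((q/4:ℕ):ℤ) * (0 : Fin 8 → ℤ) i)
      = 2 * Real.sqrt 2 * ((q/4 : ℕ) : ℝ) := by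
  apply IsLeast.csInf_eq
  constructor
  · refine ⟨0, ?_⟩
    have hz : ∑ i, ((((q/4:ℕ):ℤ) * wvec i - ((q/4:ℕ):ℤ) * (0 : Fin 8 → ℤ) i + (q:ℤ) * (0 : Fin 8 → ℤ) i : ℤ) : ℝ) ^ 2
        = 8 * ((q/4:ℕ):ℝ)^2 := by
      simp only [Pi.zero_apply, mul_zero, add_zero, sub_zero]
      have h2 : (∑ i, (((q/4:ℕ):ℤ) * wvec i)^2) = 8 * ((q/4:ℕ):ℤ)^2 := by
        simp only [mul_pow, ← Finset.mul_sum]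
        rw [show (∑ i, wvec i ^ 2) = 8 by decide]
        ring
      calc ∑ i, ((((q/4:ℕ):ℤ) * wvec i : ℤ):ℝ)^2
          = ((∑ i, (((q/4:ℕ):ℤ) * wvec i)^2 : ℤ):ℝ) := by norm_cast
      _ = 8 * ((q/4:ℕ):ℝ)^2 := by rw [h2]; norm_cast
    rw [hz, sqrt8c _ (by positivity)]
  · rintro b ⟨k, rfl⟩
    exact torus_elem_lb q hq wvec 0 wvec_mem wvec_box (zero_mem _)
      (fun i => by simp) wvec_ne k

lemma master (q : ℕ) (hq : 4 ≤ q) :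
    IsLeast
      {r : ℝ | ∃ v₁, v₁ ∈ twoE8 ∧ (∀ i, v₁ i ∈ Set.Ico (0 : ℤ) 4) ∧
        ∃ v₂, v₂ ∈ twoE8 ∧ (∀ i, v₂ i ∈ Set.Ico (0 : ℤ) 4) ∧
        v₁ ≠ v₂ ∧
        r = torusDist q (fun i => ((q / 4 : ℕ) : ℤ) * v₁ i)
              (fun i => ((q / 4 : ℕ) : ℤ) * v₂ i)}
      (2 * Real.sqrt 2 * ((q / 4 : ℕ) : ℝ)) := by
  constructor
  · exact ⟨wvec, wvec_mem, wvec_box, 0, zero_mem _, fun i => by simp, wvec_ne,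
      (torus_pair_eq q hq).symm⟩
  · rintro r ⟨v₁, h₁, hb₁, v₂, h₂, hb₂, hne, rfl⟩
    exact torus_ge q hq v₁ v₂ h₁ hb₁ h₂ hb₂ hne

lemma euc_least :
    IsLeast {r : ℝ | ∃ v₁ ∈ twoE8, ∃ v₂ ∈ twoE8, v₁ ≠ v₂ ∧ r = eucDist v₁ v₂}
      (2 * Real.sqrt 2) := by
  constructor
  · refine ⟨wvec, wvec_mem, 0, zero_mem _, wvec_ne, ?_⟩
    unfold eucDist
    have hz : ∑ i, ((wvec i - (0 : Fin 8 → ℤ) i : ℤ) : ℝ) ^ 2 = 8 := by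
      simp only [Pi.zero_apply, sub_zero]
      calc ∑ i, ((wvec i : ℤ):ℝ)^2 = ((∑ i, wvec i ^2 : ℤ):ℝ) := by norm_cast
      _ = 8 := by rw [show (∑ i, wvec i ^ 2) = 8 by decide]; norm_num
    rw [hz, sqrt8_eq]
  · rintro r ⟨v₁, h₁, v₂, h₂, hne, rfl⟩
    unfold eucDist
    rw [← sqrt8_eq]
    apply Real.sqrt_le_sqrt
    have key := sum_sq_ge' (v₁ - v₂) (sub_mem h₁ h₂) (sub_ne_zero_of_ne hne)
    simp only [Pi.sub_apply] at key
    calc (8:ℝ) = ((8:ℤ):ℝ) := by norm_num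
    _ ≤ ((∑ i, (v₁ i - v₂ i)^2 : ℤ) : ℝ) := by exact_mod_cast key
    _ = ∑ i, ((v₁ i - v₂ i : ℤ) : ℝ)^2 := by push_cast; ring

/-- `2E₈` has determinant `2⁸`, minimum Euclidean distance `2√2`,
and contains `4ℤ⁸`; the code `C' = 2E₈ ∩ {0,1,2,3}⁸` has exactly `2⁸ = 256`
points and minimum toroidal distance (modulus 4) equal to `2√2`; and the scaled
code `⌊q/4⌋·C' ⊆ ℤ_q⁸` has minimum toroidal distance (modulus `q`) equal to
`2√2·⌊q/4⌋`. -/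
theorem stmt19 (q : ℕ) (hq : 4 ≤ q) :
    twoE8.index = 2 ^ 8 ∧
    IsLeast {r : ℝ | ∃ v₁ ∈ twoE8, ∃ v₂ ∈ twoE8, v₁ ≠ v₂ ∧ r = eucDist v₁ v₂}
      (2 * Real.sqrt 2) ∧
    (∀ v : Fin 8 → ℤ, (4 : ℤ) • v ∈ twoE8) ∧
    Nat.card {v : Fin 8 → ℤ // v ∈ twoE8 ∧ ∀ i, v i ∈ Set.Ico (0 : ℤ) 4} = 256 ∧
    IsLeast
      {r : ℝ | ∃ v₁, v₁ ∈ twoE8 ∧ (∀ i, v₁ i ∈ Set.Ico (0 : ℤ) 4) ∧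
        ∃ v₂, v₂ ∈ twoE8 ∧ (∀ i, v₂ i ∈ Set.Ico (0 : ℤ) 4) ∧
        v₁ ≠ v₂ ∧ r = torusDist 4 v₁ v₂}
      (2 * Real.sqrt 2) ∧
    IsLeast
      {r : ℝ | ∃ v₁, v₁ ∈ twoE8 ∧ (∀ i, v₁ i ∈ Set.Ico (0 : ℤ) 4) ∧
        ∃ v₂, v₂ ∈ twoE8 ∧ (∀ i, v₂ i ∈ Set.Ico (0 : ℤ) 4) ∧
        v₁ ≠ v₂ ∧
        r = torusDist q (fun i => ((q / 4 : ℕ) : ℤ) * v₁ i)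
              (fun i => ((q / 4 : ℕ) : ℤ) * v₂ i)}
      (2 * Real.sqrt 2 * ((q / 4 : ℕ) : ℝ)) := by
  refine ⟨index_twoE8, euc_least, ?_, card_code, ?_, master q hq⟩
  · intro v
    rw [mem_twoE8]
    constructor
    · refine Or.inl fun i => ⟨2 * v i, ?_⟩
      show (4:ℤ) * v i = _
      ring
    · refine ⟨∑ i, v i, ?_⟩
      show ∑ i, (4:ℤ) * v i = _
      rw [Finset.mul_sum]
  · simpa using master 4 (le_refl 4)
end
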